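/- Let f_1, …, f_m : ℝ^d → ℝ be differentiable with L-Lipschitz gradients (L-smooth), f := (1/m)∑_{i=1}^m f_i, and let β > 0, r ≥ 0. Suppose for each i there are points w̃_i, w_i', and perturbations ŝ_i, ŝ_i' with ‖ŝ_i‖ ≤ r and ‖ŝ_i'‖ ≤ r; set λ_i := ∇f_i(w_i' + ŝ_i'), λ := (1/m)∑_{i=1}^m λ_i, and suppose w̄ is a point such that w̃_i − w̄ = β(λ_i − λ − ∇f_i(w̃_i + ŝ_i)) for every i. Define υ := (1/m)∑_{i=1}^m ‖w̃_i − w̄‖² and δ := (1/m)∑_{i=1}^m ‖w_i' − w̄‖². Then (1 − 12β²L²)·υ ≤ 30β²L²r² + 36β²L²·δ + 12β²‖∇f(w̄)‖². -/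

import Mathlib

open InnerProductSpace in
lemma gradient_avg' {E : Type*} [NormedAddCommGroup E] [InnerProductSpace ℝ E]
    [CompleteSpace E] {m : ℕ} (f : Fin m → E → ℝ) (hdiff : ∀ i, Differentiable ℝ (f i))
    (c : ℝ) (x : E) :
    gradient (fun w => c * ∑ i, f i w) x = c • ∑ i, gradient (f i) x := by
  have h : HasGradientAt (fun w => c * ∑ i, f i w) (c • ∑ i, gradient (f i) x) x := by
    rw [hasGradientAt_iff_hasFDerivAt, map_smul, map_sum]
    have : HasFDerivAt (fun w => ∑ i, f i w) (∑ i, toDual ℝ E (gradient (f i) x)) x :=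
      HasFDerivAt.fun_sum fun i _ => ((hdiff i x).hasGradientAt).hasFDerivAt
    simpa using this.const_mul c
  exact h.gradient

set_option maxHeartbeats 2000000 in

set_option maxHeartbeats 2000000 in
/-- Deterministic core of Lemma B.2: bound on the averaged local-update term of
the FedSMOO iterates.  Each `f i : ℝ^d → ℝ` is differentiable with `L`-Lipschitz
gradient, `f = (1/m) ∑ i, f i`, the local solutions satisfy the first-order
relation `w̃ i - w̄ = β (λ i - λ - ∇f i (w̃ i + ŝ i))` with duals
`λ i = ∇f i (w' i + ŝ' i)` and `λ` their average, and the perturbations have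
norm at most `r`.  Then
`(1 - 12β²L²)·υ ≤ 30β²L²r² + 36β²L²·δ + 12β²‖∇f(w̄)‖²` where
`υ = (1/m) ∑ i, ‖w̃ i - w̄‖²` and `δ = (1/m) ∑ i, ‖w' i - w̄‖²`. -/
theorem local_update_bound
    {d m : ℕ} (hm : 0 < m) (L β r : ℝ) (hβ : 0 < β) (hr : 0 ≤ r)
    (f : Fin m → EuclideanSpace ℝ (Fin d) → ℝ)
    (hdiff : ∀ i, Differentiable ℝ (f i))
    (hsmooth : ∀ i x y, ‖gradient (f i) x - gradient (f i) y‖ ≤ L * ‖x - y‖)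
    (wtilde wprev shat shat' : Fin m → EuclideanSpace ℝ (Fin d))
    (hshat : ∀ i, ‖shat i‖ ≤ r) (hshat' : ∀ i, ‖shat' i‖ ≤ r)
    (wbar : EuclideanSpace ℝ (Fin d))
    (hfo : ∀ i, wtilde i - wbar
      = β • (gradient (f i) (wprev i + shat' i)
          - (m : ℝ)⁻¹ • (∑ j, gradient (f j) (wprev j + shat' j))
          - gradient (f i) (wtilde i + shat i))) :
    (1 - 12 * β ^ 2 * L ^ 2) * ((m : ℝ)⁻¹ * ∑ i, ‖wtilde i - wbar‖ ^ 2)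
      ≤ 30 * β ^ 2 * L ^ 2 * r ^ 2
        + 36 * β ^ 2 * L ^ 2 * ((m : ℝ)⁻¹ * ∑ i, ‖wprev i - wbar‖ ^ 2)
        + 12 * β ^ 2 * ‖gradient (fun w => (m : ℝ)⁻¹ * ∑ i, f i w) wbar‖ ^ 2 := by
  classical
  have hmR : (0:ℝ) < (m:ℝ) := Nat.cast_pos.mpr hm
  have hν : (0:ℝ) < (m:ℝ)⁻¹ := inv_pos.mpr hmR
  set M := |L| with hMdef
  have hM : 0 ≤ M := abs_nonneg L
  have hL2 : L ^ 2 = M ^ 2 := (sq_abs L).symm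
  have hs : ∀ i x y, ‖gradient (f i) x - gradient (f i) y‖ ≤ M * ‖x - y‖ := fun i x y =>
    (hsmooth i x y).trans (mul_le_mul_of_nonneg_right (le_abs_self L) (norm_nonneg _))
  set lam := (m : ℝ)⁻¹ • (∑ j, gradient (f j) (wprev j + shat' j)) with hlam
  set G : Fin m → EuclideanSpace ℝ (Fin d) :=
    fun j => gradient (f j) (wprev j + shat' j) - gradient (f j) wbar with hGdef
  set D := gradient (fun w => (m : ℝ)⁻¹ * ∑ i, f i w) wbar with hDdef
  have hD : D = (m:ℝ)⁻¹ • ∑ j, gradient (f j) wbar := gradient_avg' f hdiff _ wbar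
  have hC : lam - D = (m:ℝ)⁻¹ • ∑ j, G j := by
    rw [hD, hlam, ← smul_sub, ← Finset.sum_sub_distrib]
  -- per-i vector decomposition
  have hvec : ∀ i, wtilde i - wbar = β • (G i
      + (gradient (f i) wbar - gradient (f i) (wtilde i + shat i)) - (lam - D) - D) := by
    intro i
    rw [hfo i]
    congr 1
    simp only [hGdef]
    abel
  -- per-i norm bound
  have key : ∀ i, ‖wtilde i - wbar‖ ≤ β * (‖G i‖
      + ‖gradient (f i) wbar - gradient (f i) (wtilde i + shat i)‖ + ‖lam - D‖ + ‖D‖) := by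
    intro i
    rw [hvec i, norm_smul, Real.norm_eq_abs, abs_of_pos hβ]
    refine mul_le_mul_of_nonneg_left ?_ hβ.le
    have h1 := norm_sub_le (G i + (gradient (f i) wbar - gradient (f i) (wtilde i + shat i)) - (lam - D)) D
    have h2 := norm_sub_le (G i + (gradient (f i) wbar - gradient (f i) (wtilde i + shat i))) (lam - D)
    have h3 := norm_add_le (G i) (gradient (f i) wbar - gradient (f i) (wtilde i + shat i))
    linarith
  clear_value lam G D
  -- bound on ‖G i‖²
  have hGle : ∀ i, ‖G i‖ ^ 2 ≤ 2 * M ^ 2 * (‖wprev i - wbar‖ ^ 2 + r ^ 2) := by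
    intro i
    simp only [hGdef]
    have h2 : ‖wprev i + shat' i - wbar‖ ≤ ‖wprev i - wbar‖ + r := by
      have he : wprev i + shat' i - wbar = (wprev i - wbar) + shat' i := by abel
      rw [he]
      exact (norm_add_le _ _).trans (by linarith [hshat' i])
    have h1 : ‖gradient (f i) (wprev i + shat' i) - gradient (f i) wbar‖
        ≤ M * (‖wprev i - wbar‖ + r) :=
      (hs i _ _).trans (mul_le_mul_of_nonneg_left h2 hM)
    nlinarith [norm_nonneg (gradient (f i) (wprev i + shat' i) - gradient (f i) wbar),
      norm_nonneg (wprev i - wbar),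
      sq_nonneg (‖wprev i - wbar‖ - r), mul_nonneg hM (add_nonneg (norm_nonneg (wprev i - wbar)) hr)]
  -- bound on the B term
  have hBle : ∀ i, ‖gradient (f i) wbar - gradient (f i) (wtilde i + shat i)‖ ^ 2
      ≤ 2 * M ^ 2 * (‖wtilde i - wbar‖ ^ 2 + r ^ 2) := by
    intro i
    have h2 : ‖wbar - (wtilde i + shat i)‖ ≤ ‖wtilde i - wbar‖ + r := by
      have he : wbar - (wtilde i + shat i) = -(wtilde i - wbar) - shat i := by abel
      rw [he]
      refine (norm_sub_le _ _).trans ?_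
      rw [norm_neg]
      linarith [hshat i]
    have h1 : ‖gradient (f i) wbar - gradient (f i) (wtilde i + shat i)‖
        ≤ M * (‖wtilde i - wbar‖ + r) :=
      (hs i _ _).trans (mul_le_mul_of_nonneg_left h2 hM)
    nlinarith [norm_nonneg (gradient (f i) wbar - gradient (f i) (wtilde i + shat i)),
      norm_nonneg (wtilde i - wbar), sq_nonneg (‖wtilde i - wbar‖ - r),
      mul_nonneg hM (add_nonneg (norm_nonneg (wtilde i - wbar)) hr)]
  -- per-i squared bound
  have hai : ∀ i, ‖wtilde i - wbar‖ ^ 2 ≤ 4 * β ^ 2 * (‖G i‖ ^ 2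
      + 2 * M ^ 2 * (‖wtilde i - wbar‖ ^ 2 + r ^ 2) + ‖lam - D‖ ^ 2 + ‖D‖ ^ 2) := by
    intro i
    have h1 : ‖wtilde i - wbar‖ ^ 2 ≤ (β * (‖G i‖
        + ‖gradient (f i) wbar - gradient (f i) (wtilde i + shat i)‖ + ‖lam - D‖ + ‖D‖)) ^ 2 :=
      pow_le_pow_left₀ (norm_nonneg _) (key i) 2
    have hb := hBle i
    set x := ‖G i‖ with hx
    set y := ‖gradient (f i) wbar - gradient (f i) (wtilde i + shat i)‖ with hy
    set z := ‖lam - D‖ with hz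
    set w := ‖D‖ with hw
    clear_value x y z w
    have hsq : (x + y + z + w) ^ 2 ≤ 4 * (x ^ 2 + y ^ 2 + z ^ 2 + w ^ 2) := by
      nlinarith [sq_nonneg (x - y), sq_nonneg (x - z), sq_nonneg (x - w), sq_nonneg (y - z),
        sq_nonneg (y - w), sq_nonneg (z - w)]
    have h2 : ‖wtilde i - wbar‖ ^ 2 ≤ β ^ 2 * (x + y + z + w) ^ 2 := by
      calc ‖wtilde i - wbar‖ ^ 2 ≤ (β * (x + y + z + w)) ^ 2 := h1
        _ = β ^ 2 * (x + y + z + w) ^ 2 := by ring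
    have h3 : β ^ 2 * (x + y + z + w) ^ 2 ≤ β ^ 2 * (4 * (x ^ 2 + y ^ 2 + z ^ 2 + w ^ 2)) :=
      mul_le_mul_of_nonneg_left hsq (sq_nonneg β)
    have h5 : β ^ 2 * y ^ 2 ≤ β ^ 2 * (2 * M ^ 2 * (‖wtilde i - wbar‖ ^ 2 + r ^ 2)) :=
      mul_le_mul_of_nonneg_left hb (sq_nonneg β)
    nlinarith [h2, h3, h5]
  -- sums
  set Sa := ∑ i, ‖wtilde i - wbar‖ ^ 2 with hSa
  set Sp := ∑ i, ‖wprev i - wbar‖ ^ 2 with hSp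
  have hSa0 : 0 ≤ Sa := Finset.sum_nonneg fun i _ => sq_nonneg _
  have hSp0 : 0 ≤ Sp := Finset.sum_nonneg fun i _ => sq_nonneg _
  set Sα := ∑ j, ‖G j‖ ^ 2 with hSα
  have hSα0 : 0 ≤ Sα := Finset.sum_nonneg fun i _ => sq_nonneg _
  have hSαle : Sα ≤ 2 * M ^ 2 * (Sp + (m:ℝ) * r ^ 2) := by
    calc Sα ≤ ∑ j, (2 * M ^ 2 * (‖wprev j - wbar‖ ^ 2 + r ^ 2)) :=
          Finset.sum_le_sum fun j _ => hGle j
      _ = 2 * M ^ 2 * (Sp + (m:ℝ) * r ^ 2) := by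
          rw [← Finset.mul_sum, Finset.sum_add_distrib, Finset.sum_const, Finset.card_univ,
            ← hSp]
          simp only [nsmul_eq_mul, Fintype.card_fin]
  -- Jensen for the c term
  have hc2 : (m:ℝ) * ‖lam - D‖ ^ 2 ≤ Sα := by
    have h1 : ‖lam - D‖ ≤ (m:ℝ)⁻¹ * ∑ j, ‖G j‖ := by
      rw [hC, norm_smul, Real.norm_eq_abs, abs_of_pos hν]
      exact mul_le_mul_of_nonneg_left (norm_sum_le _ _) hν.le
    have h2 : (∑ j, ‖G j‖) ^ 2 ≤ (m:ℝ) * Sα := by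
      have := sq_sum_le_card_mul_sum_sq (s := Finset.univ) (f := fun j => ‖G j‖)
      simpa [Finset.card_univ] using this
    have h3 : ‖lam - D‖ ^ 2 ≤ ((m:ℝ)⁻¹ * ∑ j, ‖G j‖) ^ 2 :=
      pow_le_pow_left₀ (norm_nonneg _) h1 2
    have h4 : ((m:ℝ)⁻¹ * ∑ j, ‖G j‖) ^ 2 = (m:ℝ)⁻¹ * ((m:ℝ)⁻¹ * (∑ j, ‖G j‖) ^ 2) := by
      ring
    have h5 : (m:ℝ)⁻¹ * (∑ j, ‖G j‖) ^ 2 ≤ Sα := by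
      have := mul_le_mul_of_nonneg_left h2 hν.le
      calc (m:ℝ)⁻¹ * (∑ j, ‖G j‖) ^ 2 ≤ (m:ℝ)⁻¹ * ((m:ℝ) * Sα) := this
        _ = Sα := by field_simp
    calc (m:ℝ) * ‖lam - D‖ ^ 2 ≤ (m:ℝ) * ((m:ℝ)⁻¹ * ((m:ℝ)⁻¹ * (∑ j, ‖G j‖) ^ 2)) := by
          rw [← h4]; exact mul_le_mul_of_nonneg_left h3 hmR.le
      _ = (m:ℝ)⁻¹ * (∑ j, ‖G j‖) ^ 2 := by field_simp
      _ ≤ Sα := h5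
  -- summed main inequality
  have hSum1 : Sa ≤ 4 * β ^ 2 * (Sα + 2 * M ^ 2 * (Sa + (m:ℝ) * r ^ 2)
      + (m:ℝ) * ‖lam - D‖ ^ 2 + (m:ℝ) * ‖D‖ ^ 2) := by
    calc Sa ≤ ∑ i, (4 * β ^ 2 * (‖G i‖ ^ 2
          + 2 * M ^ 2 * (‖wtilde i - wbar‖ ^ 2 + r ^ 2) + ‖lam - D‖ ^ 2 + ‖D‖ ^ 2)) :=
        Finset.sum_le_sum fun i _ => hai i
      _ = 4 * β ^ 2 * (Sα + 2 * M ^ 2 * (Sa + (m:ℝ) * r ^ 2)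
          + (m:ℝ) * ‖lam - D‖ ^ 2 + (m:ℝ) * ‖D‖ ^ 2) := by
        rw [← Finset.mul_sum]
        congr 1
        have hmid : ∑ i, (2 * M ^ 2 * (‖wtilde i - wbar‖ ^ 2 + r ^ 2))
            = 2 * M ^ 2 * (Sa + (m:ℝ) * r ^ 2) := by
          rw [← Finset.mul_sum, Finset.sum_add_distrib, Finset.sum_const, Finset.card_univ,
            ← hSa]
          simp only [nsmul_eq_mul, Fintype.card_fin]
        rw [Finset.sum_add_distrib, Finset.sum_add_distrib, Finset.sum_add_distrib,
          Finset.sum_const, Finset.sum_const, Finset.card_univ, ← hSα, hmid]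
        simp only [nsmul_eq_mul, Fintype.card_fin]
  have hmain : Sa ≤ 8 * β ^ 2 * M ^ 2 * Sa + 16 * β ^ 2 * M ^ 2 * Sp
      + 24 * β ^ 2 * M ^ 2 * (m:ℝ) * r ^ 2 + 4 * β ^ 2 * (m:ℝ) * ‖D‖ ^ 2 := by
    nlinarith [hSum1, hSαle, hc2, sq_nonneg β, mul_le_mul_of_nonneg_left hc2 (by positivity : (0:ℝ) ≤ 4 * β ^ 2),
      mul_le_mul_of_nonneg_left hSαle (by positivity : (0:ℝ) ≤ 8 * β ^ 2)]
  -- divide by m and conclude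
  rw [hL2]
  have hfin := mul_le_mul_of_nonneg_left hmain hν.le
  have hmul : (m:ℝ)⁻¹ * (8 * β ^ 2 * M ^ 2 * Sa + 16 * β ^ 2 * M ^ 2 * Sp
      + 24 * β ^ 2 * M ^ 2 * (m:ℝ) * r ^ 2 + 4 * β ^ 2 * (m:ℝ) * ‖D‖ ^ 2)
      = 8 * β ^ 2 * M ^ 2 * ((m:ℝ)⁻¹ * Sa) + 16 * β ^ 2 * M ^ 2 * ((m:ℝ)⁻¹ * Sp)
      + 24 * β ^ 2 * M ^ 2 * r ^ 2 + 4 * β ^ 2 * ‖D‖ ^ 2 := by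
    field_simp
  rw [hmul] at hfin
  have hυ0 : 0 ≤ (m:ℝ)⁻¹ * Sa := mul_nonneg hν.le hSa0
  have hδ0 : 0 ≤ (m:ℝ)⁻¹ * Sp := mul_nonneg hν.le hSp0
  nlinarith [hfin, mul_nonneg (mul_nonneg (sq_nonneg β) (sq_nonneg M)) hυ0,
    mul_nonneg (mul_nonneg (sq_nonneg β) (sq_nonneg M)) hδ0,
    mul_nonneg (mul_nonneg (sq_nonneg β) (sq_nonneg M)) (sq_nonneg r),
    mul_nonneg (sq_nonneg β) (sq_nonneg ‖D‖)]
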